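/- Monotonicity of TOAD rejections: for every stage t, R_{t-1} ⊆ R_t; hence R_s ⊆ R_t whenever s ≤ t. -/
import Mathlib


open Finset Classical

/-- The set of "active" hypothesis indices at stage `t` (indices `i ≤ t`
whose deadline `d i` has not yet passed). -/
noncomputable def toadC (d : ℕ → ℕ) (t : ℕ) : Finset ℕ :=
  (Finset.Icc 1 t).filter (fun i => t ≤ d i)

/-- The TOAD rejection set at each stage: save old rejections
`Rold = R_{t-1} \ C_t`, take the step-up index
`s = max{j ≤ |C_t| : j ≤ #{i ∈ C_t : P_i ≤ α·β(j+|Rold|)·A_i}}`, and reject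
`Rold ∪ {i ∈ C_t : P_i ≤ α·β(s+|Rold|)·A_i}` (the condition
`P_i ≤ thr·A_i` encodes `W_i = P_i/A_i ≤ thr`, with `W_i = ∞` when `A_i = 0`
since p-values are strictly positive). -/
noncomputable def toadR (d : ℕ → ℕ) (A P : ℕ → ℝ) (α : ℝ) (β : ℕ → ℝ) : ℕ → Finset ℕ
  | 0 => ∅
  | t + 1 =>
    let C := toadC d (t + 1)
    let Rold := toadR d A P α β t \ C
    let s := Nat.findGreatest
      (fun j => j ≤ (C.filter (fun i => P i ≤ α * β (j + Rold.card) * A i)).card) C.card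
    Rold ∪ C.filter (fun i => P i ≤ α * β (s + Rold.card) * A i)

section Aux

variable (d : ℕ → ℕ) (A P : ℕ → ℝ) (α : ℝ) (β : ℕ → ℝ)

lemma toadR_succ (t : ℕ) :
    toadR d A P α β (t + 1) =
      (toadR d A P α β t \ toadC d (t + 1)) ∪
        (toadC d (t + 1)).filter (fun i => P i ≤ α * β
          (Nat.findGreatest (fun j => j ≤ ((toadC d (t + 1)).filter
              (fun i => P i ≤ α * β (j + (toadR d A P α β t \ toadC d (t + 1)).card) * A i)).card)
              (toadC d (t + 1)).card
            + (toadR d A P α β t \ toadC d (t + 1)).card) * A i) := by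
  rfl

lemma toadR_mem_le : ∀ t : ℕ, ∀ i ∈ toadR d A P α β t, i ≤ t := by
  intro t
  induction t with
  | zero => simp [toadR]
  | succ u ih =>
    rw [toadR_succ]
    intro i hi
    rcases Finset.mem_union.1 hi with h | h
    · exact (ih i (Finset.mem_sdiff.1 h).1).trans (Nat.le_succ u)
    · have := (Finset.mem_filter.1 h).1
      exact (Finset.mem_Icc.1 (Finset.mem_filter.1 this).1).2

end Aux

/-- Monotonicity of TOAD rejections: a hypothesis once rejected is never
un-rejected, i.e. `R_t ⊆ R_{t+1}` for every stage `t`, and hence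
`R_s ⊆ R_t` whenever `s ≤ t`. -/
theorem toad_monotone
    (d : ℕ → ℕ) (hd : ∀ i, i ≤ d i)
    (A : ℕ → ℝ) (hA : ∀ i, 0 ≤ A i)
    (P : ℕ → ℝ) (hP : ∀ i, 0 < P i)
    (α : ℝ) (hα : α ∈ Set.Ioo (0 : ℝ) 1)
    (β : ℕ → ℝ) (hβ : Monotone β) (hβ0 : β 0 = 0) :
    (∀ t : ℕ, toadR d A P α β t ⊆ toadR d A P α β (t + 1)) ∧
    (∀ s t : ℕ, s ≤ t → toadR d A P α β s ⊆ toadR d A P α β t) := by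
  -- threshold monotonicity
  have hthr : ∀ (a b : ℕ) (i : ℕ), a ≤ b → α * β a * A i ≤ α * β b * A i := by
    intro a b i hab
    exact mul_le_mul_of_nonneg_right
      (mul_le_mul_of_nonneg_left (hβ hab) hα.1.le) (hA i)
  have step : ∀ t : ℕ, toadR d A P α β t ⊆ toadR d A P α β (t + 1) := by
    intro t
    cases t with
    | zero => simp [toadR]
    | succ u =>
      set C1 := toadC d (u + 1) with hC1
      set C2 := toadC d (u + 2) with hC2
      set Ro1 := toadR d A P α β u \ C1 with hRo1
      set Ro2 := toadR d A P α β (u + 1) \ C2 with hRo2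
      set s1 := Nat.findGreatest
        (fun j => j ≤ (C1.filter (fun i => P i ≤ α * β (j + Ro1.card) * A i)).card)
        C1.card with hs1
      set s2 := Nat.findGreatest
        (fun j => j ≤ (C2.filter (fun i => P i ≤ α * β (j + Ro2.card) * A i)).card)
        C2.card with hs2
      set F1 := C1.filter (fun i => P i ≤ α * β (s1 + Ro1.card) * A i) with hF1
      have hRdef : toadR d A P α β (u + 1) = Ro1 ∪ F1 := toadR_succ d A P α β u
      -- members of R_{u+1} active at time u+2 are in C1 and satisfied stage-(u+1) threshold
      have hmemC1 : ∀ i ∈ toadR d A P α β (u + 1), i ∈ C2 → i ∈ F1 := by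
        intro i hi hiC2
        have hle : i ≤ u + 1 := toadR_mem_le d A P α β (u + 1) i hi
        have hiC2' := Finset.mem_filter.1 hiC2
        have h1i : 1 ≤ i := (Finset.mem_Icc.1 hiC2'.1).1
        have hdi : u + 1 ≤ d i := le_trans (Nat.le_succ _) hiC2'.2
        have hiC1 : i ∈ C1 := by
          rw [hC1, toadC, Finset.mem_filter, Finset.mem_Icc]
          exact ⟨⟨h1i, hle⟩, hdi⟩
        rw [hRdef] at hi
        rcases Finset.mem_union.1 hi with h | h
        · exact absurd hiC1 (Finset.mem_sdiff.1 h).2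
        · exact h
      -- Step A: s1 + |Ro1| ≤ |R_{u+1}|
      have hA1 : s1 + Ro1.card ≤ (toadR d A P α β (u + 1)).card := by
        have hs1F : s1 ≤ F1.card := by
          rcases Nat.eq_zero_or_pos s1 with h0 | hpos
          · simp [h0]
          · exact Nat.findGreatest_of_ne_zero
              (P := fun j => j ≤ (C1.filter (fun i => P i ≤ α * β (j + Ro1.card) * A i)).card)
              hs1.symm (Nat.pos_iff_ne_zero.1 hpos)
        have hdisj : Disjoint Ro1 F1 := by
          refine Finset.disjoint_left.2 fun i hiRo hiF => ?_
          exact (Finset.mem_sdiff.1 hiRo).2 (Finset.mem_filter.1 hiF).1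
        calc s1 + Ro1.card ≤ F1.card + Ro1.card := by omega
          _ = (Ro1 ∪ F1).card := by
              rw [Finset.card_union_of_disjoint hdisj]; omega
          _ = (toadR d A P α β (u + 1)).card := by rw [hRdef]
      -- Step B: |R_{u+1}| ≤ s2 + |Ro2|
      have hB : (toadR d A P α β (u + 1)).card ≤ s2 + Ro2.card := by
        set K := toadR d A P α β (u + 1) ∩ C2 with hK
        have hcardsplit : K.card + Ro2.card = (toadR d A P α β (u + 1)).card := by
          rw [hK, hRo2]
          exact Finset.card_inter_add_card_sdiff _ _
        have hKsub : K ⊆ C2.filter (fun i => P i ≤ α * β (K.card + Ro2.card) * A i) := by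
          intro i hiK
          have hiK' := Finset.mem_inter.1 hiK
          have hiF1 : i ∈ F1 := hmemC1 i hiK'.1 hiK'.2
          have hPi : P i ≤ α * β (s1 + Ro1.card) * A i := (Finset.mem_filter.1 hiF1).2
          refine Finset.mem_filter.2 ⟨hiK'.2, hPi.trans (hthr _ _ i ?_)⟩
          omega
        have hKC2 : K.card ≤ C2.card :=
          Finset.card_le_card (Finset.inter_subset_right)
        have hKs2 : K.card ≤ s2 :=
          Nat.le_findGreatest hKC2 (Finset.card_le_card hKsub)
        omega
      -- conclude
      intro i hi
      have hRdef2 : toadR d A P α β (u + 2) =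
          Ro2 ∪ C2.filter (fun i => P i ≤ α * β (s2 + Ro2.card) * A i) :=
        toadR_succ d A P α β (u + 1)
      rw [hRdef2]
      by_cases hiC2 : i ∈ C2
      · refine Finset.mem_union_right _ (Finset.mem_filter.2 ⟨hiC2, ?_⟩)
        have hiF1 := hmemC1 i hi hiC2
        have hPi : P i ≤ α * β (s1 + Ro1.card) * A i := (Finset.mem_filter.1 hiF1).2
        exact hPi.trans (hthr _ _ i (by omega))
      · exact Finset.mem_union_left _ (Finset.mem_sdiff.2 ⟨hi, hiC2⟩)
  refine ⟨step, fun s t hst => ?_⟩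
  induction t with
  | zero => simp_all
  | succ u ih =>
    rcases Nat.lt_or_ge s (u + 1) with h | h
    · exact (ih (by omega)).trans (step u)
    · have : s = u + 1 := by omega
      subst this
      exact Finset.Subset.refl _
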